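/- If K is a finite-dimensional Hilbert space and T is a closed densely-defined operator from H to K, then ‖T(I + T*T)^{-1/2}‖² = ‖TT*‖/(1 + ‖TT*‖), which is strictly less than 1. -/

import Mathlib

open ContinuousLinearMap in
/-- Norm computation: if `W = A A*`, `D(1+W) = W = (1+W)D` and `1+W` is surjective,
then `‖D‖ = ‖W‖/(1+‖W‖)`. -/
lemma aux_norm_ratio {H K : Type*} [NormedAddCommGroup H] [InnerProductSpace ℂ H]
    [CompleteSpace H] [NormedAddCommGroup K] [InnerProductSpace ℂ K] [CompleteSpace K]
    (A : H →L[ℂ] K) (D W : K →L[ℂ] K)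
    (hWA : ∀ y, W y = A (adjoint A y))
    (h1 : ∀ y, D y + W (D y) = W y)
    (h2 : ∀ z, D (z + W z) = W z)
    (hsurj : ∀ y : K, ∃ z, z + W z = y) :
    ‖D‖ = ‖W‖ / (1 + ‖W‖) := by
  set t : ℝ := ‖W‖ with htdef
  have ht0 : 0 ≤ t := norm_nonneg W
  have h1t : (0:ℝ) < 1 + t := by linarith
  set s : ℝ := ‖A‖ with hsdef
  have hsadj : ‖adjoint A‖ = s := by
    exact (ContinuousLinearMap.adjoint : (H →L[ℂ] K) ≃ₗᵢ⋆[ℂ] (K →L[ℂ] H)).norm_map A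
  have hWcomp : W = A ∘L adjoint A := by
    ext y; exact hWA y
  have hts : t = s * s := by
    have := norm_adjoint_comp_self (adjoint A)
    rw [adjoint_adjoint, hsadj] at this
    rw [htdef, hWcomp, this]
  refine le_antisymm ?_ ?_
  · -- upper bound
    refine ContinuousLinearMap.opNorm_le_bound D (by positivity) fun y => ?_
    obtain ⟨z, hz⟩ := hsurj y
    have hDy : D y = A (adjoint A z) := by rw [← hz, h2, hWA]
    set u : H := adjoint A z with hu
    have hWz : W z = A u := hWA z
    have hyz : y = z + A u := by rw [← hz, hWz]
    have hre : RCLike.re (inner ℂ z (A u) : ℂ) = ‖u‖ ^ 2 := by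
      have : (inner ℂ z (A u) : ℂ) = inner ℂ u u := by
        rw [← adjoint_inner_left A u z, ← hu]
      rw [this]
      exact inner_self_eq_norm_sq u
    have hynorm : ‖y‖ ^ 2 = ‖z‖ ^ 2 + 2 * ‖u‖ ^ 2 + ‖A u‖ ^ 2 := by
      rw [hyz, @norm_add_sq ℂ _ _ _ _ z (A u), hre]
    have hd : ‖A u‖ ≤ s * ‖u‖ := A.le_opNorm u
    have hb : ‖u‖ ≤ s * ‖z‖ := by
      have := (adjoint A).le_opNorm z
      rwa [hsadj] at this
    have key : (‖A u‖ * (1 + t)) ^ 2 ≤ (t * ‖y‖) ^ 2 := by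
      have h1 : ‖A u‖ ^ 2 ≤ t * ‖u‖ ^ 2 := by
        rw [hts]; nlinarith [norm_nonneg (A u), norm_nonneg u]
      have h2' : ‖u‖ ^ 2 ≤ t * ‖z‖ ^ 2 := by
        rw [hts]; nlinarith [norm_nonneg u, norm_nonneg z]
      have hyn : (t * ‖y‖) ^ 2 = t ^ 2 * (‖z‖ ^ 2 + 2 * ‖u‖ ^ 2 + ‖A u‖ ^ 2) := by
        rw [mul_pow, hynorm]
      rw [hyn]
      nlinarith [norm_nonneg (A u), norm_nonneg u, norm_nonneg z, sq_nonneg (‖A u‖)]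
    have hkey' : ‖A u‖ * (1 + t) ≤ t * ‖y‖ := by
      have hL : 0 ≤ ‖A u‖ * (1 + t) := by positivity
      have hR : 0 ≤ t * ‖y‖ := by positivity
      nlinarith [key]
    rw [hDy, ← hWA z, hWz]
    rw [div_mul_eq_mul_div, le_div_iff₀ h1t]
    linarith [hkey']
  · -- lower bound
    have hWle : t ≤ (1 + t) * ‖D‖ := by
      have : ∀ y, ‖W y‖ ≤ (1 + t) * ‖D‖ * ‖y‖ := by
        intro y
        calc ‖W y‖ = ‖D y + W (D y)‖ := by rw [h1]
          _ ≤ ‖D y‖ + ‖W (D y)‖ := norm_add_le _ _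
          _ ≤ ‖D y‖ + t * ‖D y‖ := by
              have := W.le_opNorm (D y); linarith
          _ = (1 + t) * ‖D y‖ := by ring
          _ ≤ (1 + t) * (‖D‖ * ‖y‖) := by
              have := D.le_opNorm y
              nlinarith [norm_nonneg (D y)]
          _ = (1 + t) * ‖D‖ * ‖y‖ := by ring
      exact ContinuousLinearMap.opNorm_le_bound W (by positivity) this
    rw [div_le_iff₀ h1t]
    nlinarith [norm_nonneg D]

set_option maxHeartbeats 1000000 in
/-- Let `K` be finite dimensional and `T : H → K` closed and densely
defined.  Let `B = (I + T*T)^{-1}`, `R = (I + T*T)^{-1/2}` (the positive square root of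
`B`), let `C = T(I + T*T)^{-1/2}` (defined on all of `H`), and let `W = TT*` (a bounded
operator on `K`).  Then `‖C‖² = ‖W‖ / (1 + ‖W‖)`, which is strictly less than `1`. -/
theorem norm_sq_comp_inv_sqrt_eq_of_finiteDimensional
    {H K : Type*} [NormedAddCommGroup H] [InnerProductSpace ℂ H] [CompleteSpace H]
    [NormedAddCommGroup K] [InnerProductSpace ℂ K] [CompleteSpace K]
    [FiniteDimensional ℂ K]
    (T : H →ₗ.[ℂ] K) (hdense : Dense (T.domain : Set H)) (hclosed : T.IsClosed)
    (B R : H →L[ℂ] H) (hB : B.IsPositive)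
    (hBinv₁ : ∀ p : {p : T.domain // T p ∈ T.adjoint.domain},
      B ((p.1 : H) + T.adjoint ⟨T p.1, p.2⟩) = (p.1 : H))
    (hBinv₂ : ∀ y : H, ∃ p : {p : T.domain // T p ∈ T.adjoint.domain},
      (p.1 : H) + T.adjoint ⟨T p.1, p.2⟩ = y)
    (hR : R.IsPositive) (hRsq : R * R = B)
    (C : H →L[ℂ] K)
    (hC : ∀ x : H, ∃ hx : R x ∈ T.domain, C x = T ⟨R x, hx⟩)
    (W : K →L[ℂ] K)
    (hWdom : ∀ y : K, ∃ hy : y ∈ T.adjoint.domain, T.adjoint ⟨y, hy⟩ ∈ T.domain)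
    (hW : ∀ y : K, ∀ hy : y ∈ T.adjoint.domain, ∀ h2 : T.adjoint ⟨y, hy⟩ ∈ T.domain,
      W y = T ⟨T.adjoint ⟨y, hy⟩, h2⟩) :
    ‖C‖ ^ 2 = ‖W‖ / (1 + ‖W‖) ∧ ‖W‖ / (1 + ‖W‖) < 1 := by
  classical
  have hdom : ∀ y : K, y ∈ T.adjoint.domain := fun y => (hWdom y).choose
  -- the adjoint as an everywhere-defined continuous linear map
  let Slin : K →ₗ[ℂ] H :=
    { toFun := fun y => T.adjoint ⟨y, hdom y⟩
      map_add' := fun y z => T.adjoint.map_add ⟨y, hdom y⟩ ⟨z, hdom z⟩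
      map_smul' := fun c y => T.adjoint.map_smul c ⟨y, hdom y⟩ }
  let S' : K →L[ℂ] H := LinearMap.toContinuousLinearMap Slin
  let A : H →L[ℂ] K := ContinuousLinearMap.adjoint S'
  have hS' : ∀ (y : K) (hy : y ∈ T.adjoint.domain), T.adjoint ⟨y, hy⟩ = S' y :=
    fun y hy => rfl
  have hadj : ContinuousLinearMap.adjoint A = S' := ContinuousLinearMap.adjoint_adjoint S'
  -- `T` agrees with `A` on the domain of `T`
  have hTA : ∀ p : T.domain, T p = A (p : H) := by
    intro p
    apply ext_inner_left ℂ
    intro y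
    calc (inner ℂ y (T p) : ℂ)
        = inner ℂ (T.adjoint ⟨y, hdom y⟩ : H) (p : H) :=
          ((T.adjoint_isFormalAdjoint hdense) ⟨y, hdom y⟩ p).symm
      _ = inner ℂ (ContinuousLinearMap.adjoint A y) (p : H) := by rw [hS' y (hdom y), ← hadj]
      _ = inner ℂ y (A (p : H)) := ContinuousLinearMap.adjoint_inner_left A (p : H) y
  have hCA : ∀ x, C x = A (R x) := fun x => by
    obtain ⟨hx, hCx⟩ := hC x
    rw [hCx, hTA ⟨R x, hx⟩]
  have hWA : ∀ y, W y = A (ContinuousLinearMap.adjoint A y) := fun y => by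
    obtain ⟨hy, h2⟩ := hWdom y
    rw [hW y hy h2, hTA ⟨_, h2⟩, hadj]
    rfl
  -- the two inverse identities for `B`
  have hB1 : ∀ x : H, B (x + S' (A x)) = x := by
    have hcont1 : Continuous fun x : H => B (x + S' (A x)) := by fun_prop
    have heq : Set.EqOn (fun x : H => B (x + S' (A x))) id (T.domain : Set H) := by
      intro x hx
      have h2 : T ⟨x, hx⟩ ∈ T.adjoint.domain := hdom _
      have e1 : T.adjoint ⟨T ⟨x, hx⟩, h2⟩ = S' (A x) := by
        rw [hS' _ h2, hTA ⟨x, hx⟩]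
      have := hBinv₁ ⟨⟨x, hx⟩, h2⟩
      simpa [e1] using this
    exact fun x => congrFun (Continuous.ext_on hdense hcont1 continuous_id heq) x
  have hB2 : ∀ y : H, B y + S' (A (B y)) = y := by
    intro y
    obtain ⟨⟨p, hp⟩, hpy⟩ := hBinv₂ y
    have e1 : T.adjoint ⟨T p, hp⟩ = S' (A (p : H)) := by
      rw [hS' _ hp, hTA p]
    have hpy' : (p : H) + S' (A (p : H)) = y := by rw [← e1]; exact hpy
    have hBy : B y = (p : H) := by rw [← hpy']; exact hB1 (p : H)
    rw [hBy, hpy']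
  -- `D = C C*`
  set D : K →L[ℂ] K := C ∘L ContinuousLinearMap.adjoint C with hD
  have hCcomp : C = A ∘L R := by ext x; exact hCA x
  have hCadj : ContinuousLinearMap.adjoint C = R ∘L ContinuousLinearMap.adjoint A := by
    rw [hCcomp, ContinuousLinearMap.adjoint_comp]
    congr 1
    rw [← ContinuousLinearMap.star_eq_adjoint]
    exact hR.isSelfAdjoint
  have hRR : ∀ x : H, R (R x) = B x := fun x => by
    rw [← ContinuousLinearMap.mul_apply, hRsq]
  have hDy : ∀ y, D y = A (B (ContinuousLinearMap.adjoint A y)) := by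
    intro y
    have e : D y = C (R (ContinuousLinearMap.adjoint A y)) := by
      rw [hD]
      simp [hCadj]
    rw [e, hCA, hRR]
  have h2' : ∀ z, D (z + W z) = W z := by
    intro z
    have e : ContinuousLinearMap.adjoint A (z + W z)
        = ContinuousLinearMap.adjoint A z
          + S' (A (ContinuousLinearMap.adjoint A z)) := by
      rw [map_add, hWA z, hadj]
    rw [hDy, e, hB1, ← hWA z]
  have h1' : ∀ y, D y + W (D y) = W y := by
    intro y
    have e2 : W (D y)
        = A ((ContinuousLinearMap.adjoint A)
            (A (B ((ContinuousLinearMap.adjoint A) y)))) := by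
      rw [hWA (D y), hDy y]
    rw [e2, hDy y, ← map_add A, hadj, hB2, ← hadj, ← hWA y]
  -- kernel of `1 + W` is trivial
  have hker : ∀ v : K, v + W v = 0 → v = 0 := by
    intro v hv0
    have hre : RCLike.re (inner ℂ (v + W v) v : ℂ) = 0 := by
      rw [hv0, inner_zero_left]; simp
    have e1 : RCLike.re (inner ℂ (W v) v : ℂ)
        = ‖ContinuousLinearMap.adjoint A v‖ ^ 2 := by
      rw [hWA v, ← ContinuousLinearMap.adjoint_inner_right A
        (ContinuousLinearMap.adjoint A v) v]
      exact inner_self_eq_norm_sq _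
    rw [inner_add_left, map_add, inner_self_eq_norm_sq, e1] at hre
    have h1 : ‖v‖ = 0 := by
      nlinarith [norm_nonneg v, sq_nonneg ‖ContinuousLinearMap.adjoint A v‖]
    exact norm_eq_zero.mp h1
  have hinj : Function.Injective fun y : K => y + W y := by
    intro a b hab
    simp only at hab
    have h0 : (a - b) + W (a - b) = 0 := by
      rw [map_sub, sub_add_sub_comm, hab, sub_self]
    have := hker _ h0
    rwa [sub_eq_zero] at this
  have hsurj : ∀ y : K, ∃ z, z + W z = y := by
    have hLinj : Function.Injective
        ((ContinuousLinearMap.id ℂ K + W : K →L[ℂ] K) : K →ₗ[ℂ] K) := by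
      intro a b hab
      exact hinj (by simpa using hab)
    have hLsurj := LinearMap.injective_iff_surjective.mp hLinj
    intro y
    obtain ⟨z, hz⟩ := hLsurj y
    exact ⟨z, by simpa using hz⟩
  have hnorm : ‖D‖ = ‖W‖ / (1 + ‖W‖) := aux_norm_ratio A D W hWA h1' h2' hsurj
  constructor
  · rw [← hnorm, hD]
    have e := ContinuousLinearMap.norm_adjoint_comp_self (ContinuousLinearMap.adjoint C)
    rw [ContinuousLinearMap.adjoint_adjoint] at e
    rw [e]
    have : ‖ContinuousLinearMap.adjoint C‖ = ‖C‖ :=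
      (ContinuousLinearMap.adjoint : (H →L[ℂ] K) ≃ₗᵢ⋆[ℂ] (K →L[ℂ] H)).norm_map C
    rw [this]
    ring
  · rw [div_lt_one (by linarith [norm_nonneg W])]
    linarith [norm_nonneg W]
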